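/- Let V be a finite-dimensional complex inner product space, and let Π₊, Π₋, Σ₊, Σ₋ be orthogonal projections on V with Π₊ + Π₋ = I and Σ₊ + Σ₋ = I. Then V admits an orthogonal direct sum decomposition V = ⊕_k V_k into subspaces V_k, each of dimension at most 2, such that every V_k is invariant under each of the four projections Π₊, Π₋, Σ₊, Σ₋ (equivalently, the four projections are simultaneously block diagonal with blocks of size at most 2×2 in a suitable orthonormal basis). -/

import Mathlib

open Module

section Aux

variable {V : Type*} [NormedAddCommGroup V] [InnerProductSpace ℂ V] [FiniteDimensional ℂ V]

/-- Given two symmetric idempotents and a nonzero invariant subspace `U`, there is a nonzero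
invariant subspace of `U` of dimension at most 2. -/
lemma exists_small_invariant (P Q : V →ₗ[ℂ] V)
    (hP2 : P ∘ₗ P = P) (hQ2 : Q ∘ₗ Q = Q)
    (U : Submodule ℂ V) (hU : U ≠ ⊥)
    (hUP : ∀ x ∈ U, P x ∈ U) (hUQ : ∀ x ∈ U, Q x ∈ U) :
    ∃ W : Submodule ℂ V, W ≤ U ∧ W ≠ ⊥ ∧ finrank ℂ W ≤ 2 ∧
      (∀ x ∈ W, P x ∈ W) ∧ (∀ x ∈ W, Q x ∈ W) := by
  have hP2' : ∀ x, P (P x) = P x := fun x => congrFun (congrArg DFunLike.coe hP2) x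
  have hQ2' : ∀ x, Q (Q x) = Q x := fun x => congrFun (congrArg DFunLike.coe hQ2) x
  set U₁ : Submodule ℂ V := U ⊓ LinearMap.ker (P - LinearMap.id) with hU₁def
  by_cases hU₁ : U₁ = ⊥
  · -- P vanishes on U; take an eigenvector of Q restricted to U
    have hPzero : ∀ x ∈ U, P x = 0 := by
      intro x hx
      have h1 : P x ∈ U₁ := by
        refine ⟨hUP x hx, ?_⟩
        simp [LinearMap.mem_ker, hP2' x]
      rw [hU₁] at h1
      simpa using h1
    haveI : Nontrivial U := Submodule.nontrivial_iff_ne_bot.mpr hU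
    set f : U →ₗ[ℂ] U := Q.restrict hUQ with hf
    obtain ⟨μ, hμ⟩ := Module.End.exists_eigenvalue f
    obtain ⟨v, hv⟩ := hμ.exists_hasEigenvector
    have hQv : Q (v : V) = μ • (v : V) := by
      have := hv.apply_eq_smul
      have := congrArg (Subtype.val) this
      simpa [f, LinearMap.restrict_apply] using this
    refine ⟨Submodule.span ℂ {(v : V)}, ?_, ?_, ?_, ?_, ?_⟩
    · rw [Submodule.span_singleton_le_iff_mem]; exact v.2
    · simp only [ne_eq, Submodule.span_singleton_eq_bot]
      exact fun h => hv.2 (by exact_mod_cast h)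
    · rw [finrank_span_singleton (fun h => hv.2 (by exact_mod_cast h))]; omega
    · intro x hx
      have hxU : x ∈ U := Submodule.span_singleton_le_iff_mem _ _ |>.mpr v.2 hx
      rw [hPzero x hxU]; exact Submodule.zero_mem _
    · intro x hx
      obtain ⟨c, rfl⟩ := Submodule.mem_span_singleton.mp hx
      rw [map_smul, hQv]
      exact Submodule.smul_mem _ _ (Submodule.smul_mem _ _ (Submodule.mem_span_singleton_self _))
  · -- take an eigenvector u of P Q P on U₁ = Fix(P) ∩ U; then span {u, Q u} works
    have hU₁le : U₁ ≤ U := inf_le_left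
    have hfix : ∀ x ∈ U₁, P x = x := by
      intro x hx
      have := (Submodule.mem_inf.mp hx).2
      simp only [LinearMap.mem_ker, LinearMap.sub_apply, LinearMap.id_apply, sub_eq_zero] at this
      exact this
    have hinv : ∀ x ∈ U₁, (P ∘ₗ Q ∘ₗ P) x ∈ U₁ := by
      intro x hx
      constructor
      · simp only [LinearMap.comp_apply]
        exact hUP _ (hUQ _ (hUP _ (hU₁le hx)))
      · simp [LinearMap.mem_ker, LinearMap.comp_apply, hP2', sub_eq_zero]
    haveI : Nontrivial U₁ := Submodule.nontrivial_iff_ne_bot.mpr hU₁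
    set f : U₁ →ₗ[ℂ] U₁ := (P ∘ₗ Q ∘ₗ P).restrict hinv with hf
    obtain ⟨μ, hμ⟩ := Module.End.exists_eigenvalue f
    obtain ⟨u, hu⟩ := hμ.exists_hasEigenvector
    have hu0 : (u : V) ≠ 0 := fun h => hu.2 (by exact_mod_cast h)
    have hPu : P (u : V) = (u : V) := hfix _ u.2
    have hPQu : P (Q (u : V)) = μ • (u : V) := by
      have := congrArg (Subtype.val) hu.apply_eq_smul
      simpa [f, LinearMap.restrict_apply, LinearMap.comp_apply, hPu] using this
    set W : Submodule ℂ V := Submodule.span ℂ {(u : V), Q (u : V)} with hW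
    have huW : (u : V) ∈ W :=
      Submodule.subset_span (by simp)
    have hQuW : Q (u : V) ∈ W :=
      Submodule.subset_span (by simp)
    have hmem : ∀ x ∈ W, ∃ a b : ℂ, x = a • (u : V) + b • Q (u : V) := by
      intro x hx
      rw [hW, Submodule.mem_span_insert] at hx
      obtain ⟨a, z, hz, rfl⟩ := hx
      obtain ⟨b, rfl⟩ := Submodule.mem_span_singleton.mp hz
      exact ⟨a, b, rfl⟩
    refine ⟨W, ?_, ?_, ?_, ?_, ?_⟩
    · rw [hW, Submodule.span_le]
      intro x hx
      simp only [Set.mem_insert_iff, Set.mem_singleton_iff] at hx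
      rcases hx with rfl | rfl
      · exact hU₁le u.2
      · exact hUQ _ (hU₁le u.2)
    · intro h
      rw [h] at huW
      exact hu0 (by simpa using huW)
    · classical
      have h1 : W = Submodule.span ℂ (↑({(u : V), Q (u : V)} : Finset V) : Set V) := by
        rw [hW]; congr 1; simp
      rw [h1]
      exact (finrank_span_finset_le_card _).trans ((Finset.card_insert_le _ _).trans (by simp))
    · intro x hx
      obtain ⟨a, b, rfl⟩ := hmem x hx
      have : P (a • (u : V) + b • Q (u : V)) = a • (u : V) + b • (μ • (u : V)) := by
        simp [map_add, map_smul, hPu, hPQu]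
      rw [this]
      exact Submodule.add_mem _ (Submodule.smul_mem _ _ huW)
        (Submodule.smul_mem _ _ (Submodule.smul_mem _ _ huW))
    · intro x hx
      obtain ⟨a, b, rfl⟩ := hmem x hx
      have : Q (a • (u : V) + b • Q (u : V)) = (a + b) • Q (u : V) := by
        simp [map_add, map_smul, hQ2', add_smul]
      rw [this]
      exact Submodule.smul_mem _ _ hQuW
  
/-- Induction on dimension: every invariant subspace decomposes into an orthogonal family
of invariant subspaces of dimension at most 2. -/
lemma decompose (P Q : V →ₗ[ℂ] V)
    (hPs : P.IsSymmetric) (hQs : Q.IsSymmetric)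
    (hP2 : P ∘ₗ P = P) (hQ2 : Q ∘ₗ Q = Q) :
    ∀ n : ℕ, ∀ U : Submodule ℂ V, finrank ℂ U ≤ n →
      (∀ x ∈ U, P x ∈ U) → (∀ x ∈ U, Q x ∈ U) →
      ∃ (N : ℕ) (W : Fin N → Submodule ℂ V),
        (∀ k l, k ≠ l → ∀ x ∈ W k, ∀ y ∈ W l, (inner ℂ x y : ℂ) = 0) ∧
        (⨆ k, W k) = U ∧
        (∀ k, finrank ℂ (W k) ≤ 2) ∧
        (∀ k, ∀ x ∈ W k, P x ∈ W k) ∧ (∀ k, ∀ x ∈ W k, Q x ∈ W k) := by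
  intro n
  induction n with
  | zero =>
    intro U hU _ _
    have : U = ⊥ := Submodule.finrank_eq_zero.mp (Nat.le_zero.mp hU)
    refine ⟨0, Fin.elim0, ?_, ?_, ?_, ?_, ?_⟩ <;>
      first
        | (intro k; exact k.elim0)
        | (intro k l _; exact k.elim0)
        | (rw [this]; exact iSup_of_empty _)
  | succ n ih =>
    intro U hU hUP hUQ
    by_cases hUbot : U = ⊥
    · refine ⟨0, Fin.elim0, ?_, ?_, ?_, ?_, ?_⟩ <;>
        first
          | (intro k; exact k.elim0)
          | (intro k l _; exact k.elim0)
          | (rw [hUbot]; exact iSup_of_empty _)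
    · obtain ⟨W₀, hW₀U, hW₀bot, hW₀rank, hW₀P, hW₀Q⟩ :=
        exists_small_invariant P Q hP2 hQ2 U hUbot hUP hUQ
      set U' : Submodule ℂ V := W₀ᗮ ⊓ U with hU'def
      have hU'U : U' ≤ U := inf_le_right
      have hU'orth : U' ≤ W₀ᗮ := inf_le_left
      have hrank : finrank ℂ W₀ + finrank ℂ U' = finrank ℂ U :=
        Submodule.finrank_add_inf_finrank_orthogonal hW₀U
      have hW₀pos : 0 < finrank ℂ W₀ := by
        haveI : Nontrivial W₀ := Submodule.nontrivial_iff_ne_bot.mpr hW₀bot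
        exact finrank_pos
      have hU'le : finrank ℂ U' ≤ n := by omega
      have hU'P : ∀ x ∈ U', P x ∈ U' := by
        intro x hx
        refine Submodule.mem_inf.mpr ⟨?_, hUP x (hU'U hx)⟩
        rw [Submodule.mem_orthogonal]
        intro w hw
        rw [← hPs w x]
        exact (Submodule.mem_orthogonal _ _).mp (hU'orth hx) _ (hW₀P w hw)
      have hU'Q : ∀ x ∈ U', Q x ∈ U' := by
        intro x hx
        refine Submodule.mem_inf.mpr ⟨?_, hUQ x (hU'U hx)⟩
        rw [Submodule.mem_orthogonal]
        intro w hw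
        rw [← hQs w x]
        exact (Submodule.mem_orthogonal _ _).mp (hU'orth hx) _ (hW₀Q w hw)
      obtain ⟨N, W, hWorth, hWsup, hWrank, hWP, hWQ⟩ := ih U' hU'le hU'P hU'Q
      have hWU' : ∀ k, W k ≤ U' := fun k => hWsup ▸ le_iSup W k
      refine ⟨N + 1, Fin.cons W₀ W, ?_, ?_, ?_, ?_, ?_⟩
      · intro k l hkl x hx y hy
        induction k using Fin.cases with
        | zero =>
          induction l using Fin.cases with
          | zero => exact absurd rfl hkl
          | succ l =>
            rw [Fin.cons_zero] at hx
            rw [Fin.cons_succ] at hy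
            exact (Submodule.mem_orthogonal _ _).mp (hU'orth (hWU' l hy)) x hx
        | succ k =>
          induction l using Fin.cases with
          | zero =>
            rw [Fin.cons_succ] at hx
            rw [Fin.cons_zero] at hy
            rw [← inner_conj_symm]
            rw [(Submodule.mem_orthogonal _ _).mp (hU'orth (hWU' k hx)) y hy]
            simp
          | succ l =>
            rw [Fin.cons_succ] at hx hy
            exact hWorth k l (fun h => hkl (by rw [h])) x hx y hy
      · apply le_antisymm
        · apply iSup_le
          intro k
          induction k using Fin.cases with
          | zero => simpa using hW₀U
          | succ k =>
            rw [Fin.cons_succ]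
            exact (hWU' k).trans hU'U
        · have hsup : W₀ ⊔ (W₀ᗮ ⊓ U) = U := Submodule.sup_orthogonal_inf_of_hasOrthogonalProjection hW₀U
          rw [← hsup]
          apply sup_le
          · exact le_trans (by rw [Fin.cons_zero]) (le_iSup (Fin.cons W₀ W) 0)
          · rw [← hU'def, ← hWsup]
            apply iSup_le
            intro k
            exact le_trans (by rw [Fin.cons_succ]) (le_iSup (Fin.cons W₀ W) k.succ)
      · intro k
        induction k using Fin.cases with
        | zero => rw [Fin.cons_zero]; exact hW₀rank
        | succ k => rw [Fin.cons_succ]; exact hWrank k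
      · intro k
        induction k using Fin.cases with
        | zero => simpa using hW₀P
        | succ k => rw [Fin.cons_succ]; exact hWP k
      · intro k
        induction k using Fin.cases with
        | zero => simpa using hW₀Q
        | succ k => rw [Fin.cons_succ]; exact hWQ k

end Aux

theorem two_pairs_of_projections_block_diagonal
    (V : Type*) [NormedAddCommGroup V] [InnerProductSpace ℂ V] [FiniteDimensional ℂ V]
    (Pp Pm Sp Sm : V →ₗ[ℂ] V)
    (hPp : Pp.IsSymmetric) (hPm : Pm.IsSymmetric)
    (hSp : Sp.IsSymmetric) (hSm : Sm.IsSymmetric)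
    (hPp2 : Pp ∘ₗ Pp = Pp) (hPm2 : Pm ∘ₗ Pm = Pm)
    (hSp2 : Sp ∘ₗ Sp = Sp) (hSm2 : Sm ∘ₗ Sm = Sm)
    (hP : Pp + Pm = LinearMap.id) (hS : Sp + Sm = LinearMap.id) :
    ∃ (N : ℕ) (W : Fin N → Submodule ℂ V),
      -- the subspaces are pairwise orthogonal
      (∀ k l, k ≠ l → ∀ x ∈ W k, ∀ y ∈ W l, (inner ℂ x y : ℂ) = 0) ∧
      -- they form an (internal) direct sum decomposition of V
      DirectSum.IsInternal W ∧
      -- each subspace has dimension at most 2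
      (∀ k, Module.finrank ℂ (W k) ≤ 2) ∧
      -- each subspace is invariant under all four projections
      (∀ k, ∀ T ∈ ({Pp, Pm, Sp, Sm} : Set (V →ₗ[ℂ] V)), ∀ x ∈ W k, T x ∈ W k) := by
  obtain ⟨N, W, horth, hsup, hrank, hPinv, hSinv⟩ :=
    decompose Pp Sp hPp hSp hPp2 hSp2 (finrank ℂ V) ⊤ (by simp [finrank_top])
      (fun x _ => Submodule.mem_top) (fun x _ => Submodule.mem_top)
  have hindep : iSupIndep W := by
    apply OrthogonalFamily.independent (𝕜 := ℂ)
    intro i j hij v w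
    exact horth i j hij v v.2 w w.2
  refine ⟨N, W, horth,
    DirectSum.isInternal_submodule_of_iSupIndep_of_iSup_eq_top hindep hsup, hrank, ?_⟩
  have hPm_eq : Pm = LinearMap.id - Pp := by rw [← hP]; abel
  have hSm_eq : Sm = LinearMap.id - Sp := by rw [← hS]; abel
  intro k T hT x hx
  simp only [Set.mem_insert_iff, Set.mem_singleton_iff] at hT
  rcases hT with rfl | rfl | rfl | rfl
  · exact hPinv k x hx
  · rw [hPm_eq]
    simpa using Submodule.sub_mem _ hx (hPinv k x hx)
  · exact hSinv k x hx
  · rw [hSm_eq]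
    simpa using Submodule.sub_mem _ hx (hSinv k x hx)
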